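/- Let X be a random variable with |X| ≤ M almost surely for some M > 0, let N ~ N(0,1) be independent of X, let Y = X + N have density p_Y = e^{−Q} with Q′(y) = y − E[X | Y = y]. If a > 0 and n ≥ 1 satisfy n = (2/π) ∫₀¹ a t Q′(a t)/√(1−t²) dt (i.e., a is the n-th Mhaskar–Rakhmanov–Saff number of Q), then a ≤ (2M + √2) √n. In particular, for every z ≥ 0 one has ∫₀¹ z t Q′(z t)/√(1−t²) dt ≥ (π/4) z² − M z. -/

import Mathlib

open MeasureTheory ProbabilityTheory Real Filter

section MRSAux
open Set intervalIntegral

lemma mrs_invsqrt_ii : IntervalIntegrable (fun t : ℝ => (Real.sqrt (1 - t^2))⁻¹) volume 0 1 := by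
  have h : IntervalIntegrable (fun x : ℝ => x ^ (-(1/2) : ℝ)) volume 0 1 :=
    intervalIntegrable_rpow' (by norm_num)
  have h2 : IntervalIntegrable (fun x : ℝ => (1 - x) ^ (-(1/2) : ℝ)) volume 0 1 := by
    simpa using (h.comp_sub_left 1).symm
  apply h2.mono_fun
  · exact ((Real.continuous_sqrt.comp (by continuity)).measurable.inv).aestronglyMeasurable
  · rw [uIoc_of_le (by norm_num : (0:ℝ) ≤ 1)]
    filter_upwards [ae_restrict_mem measurableSet_Ioc] with t ht
    obtain ⟨ht0, ht1⟩ := ht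
    have h1t : (0:ℝ) ≤ 1 - t := by linarith
    rw [Real.norm_eq_abs, Real.norm_eq_abs, abs_of_nonneg (by positivity),
      abs_of_nonneg (by positivity), Real.rpow_neg h1t, ← Real.sqrt_eq_rpow]
    rcases eq_or_lt_of_le ht1 with rfl | htlt
    · simp
    · apply inv_anti₀ (Real.sqrt_pos.mpr (by linarith))
      apply Real.sqrt_le_sqrt; nlinarith

lemma mrs_ii_div {f : ℝ → ℝ} (hf : Measurable f) (C : ℝ)
    (hb : ∀ t ∈ Set.Ioc (0:ℝ) 1, |f t| ≤ C) :
    IntervalIntegrable (fun t => f t / Real.sqrt (1 - t^2)) volume 0 1 := by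
  have hC := (mrs_invsqrt_ii.const_mul C)
  apply hC.mono_fun
  · exact (hf.div ((Real.continuous_sqrt.comp (by continuity)).measurable)).aestronglyMeasurable
  · rw [uIoc_of_le (by norm_num : (0:ℝ) ≤ 1)]
    filter_upwards [ae_restrict_mem measurableSet_Ioc] with t ht
    have hs : (0:ℝ) ≤ Real.sqrt (1 - t^2) := Real.sqrt_nonneg _
    rw [Real.norm_eq_abs, Real.norm_eq_abs, div_eq_mul_inv, abs_mul,
      abs_of_nonneg (inv_nonneg.mpr hs)]
    calc |f t| * (Real.sqrt (1 - t^2))⁻¹ ≤ C * (Real.sqrt (1 - t^2))⁻¹ :=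
          mul_le_mul_of_nonneg_right (hb t ht) (inv_nonneg.mpr hs)
      _ ≤ |C * (Real.sqrt (1 - t^2))⁻¹| := le_abs_self _

lemma mrs_ii_t : IntervalIntegrable (fun t : ℝ => t / Real.sqrt (1 - t^2)) volume 0 1 :=
  mrs_ii_div measurable_id 1 (fun t ht => by rw [abs_of_nonneg ht.1.le]; exact ht.2)

lemma mrs_ii_t2 : IntervalIntegrable (fun t : ℝ => t^2 / Real.sqrt (1 - t^2)) volume 0 1 :=
  mrs_ii_div (measurable_id.pow_const 2) 1 (fun t ht => by
    rw [abs_of_nonneg (sq_nonneg t)]; nlinarith [ht.1.le, ht.2])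

lemma mrs_int_t : ∫ t in (0:ℝ)..1, t / Real.sqrt (1 - t^2) = 1 := by
  have key : ∫ t in (0:ℝ)..1, t / Real.sqrt (1 - t^2)
      = (fun t : ℝ => -Real.sqrt (1 - t^2)) 1 - (fun t : ℝ => -Real.sqrt (1 - t^2)) 0 := by
    apply integral_eq_sub_of_hasDeriv_right_of_le (f := fun t : ℝ => -Real.sqrt (1 - t^2))
      (f' := fun t : ℝ => t / Real.sqrt (1 - t^2)) (by norm_num)
    · exact (Real.continuous_sqrt.comp (by continuity)).neg.continuousOn
    · intro x hx
      have hx2 : (0:ℝ) < 1 - x^2 := by nlinarith [hx.1, hx.2]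
      have h1 : HasDerivAt (fun t : ℝ => 1 - t^2) (-(2*x)) x := by
        simpa using ((hasDerivAt_pow 2 x).const_sub 1)
      have h2 := (Real.hasDerivAt_sqrt (ne_of_gt hx2)).comp x h1
      have h3 : HasDerivAt (fun t : ℝ => -Real.sqrt (1 - t^2))
          (-(1 / (2 * Real.sqrt (1 - x^2)) * -(2*x))) x := h2.neg
      have hsx : Real.sqrt (1 - x^2) ≠ 0 := ne_of_gt (Real.sqrt_pos.mpr hx2)
      have : -(1 / (2 * Real.sqrt (1 - x^2)) * -(2*x)) = x / Real.sqrt (1 - x^2) := by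
        field_simp
      rw [this] at h3
      exact h3.hasDerivWithinAt
    · exact mrs_ii_t
  simpa using key

lemma mrs_int_t2 : ∫ t in (0:ℝ)..1, t^2 / Real.sqrt (1 - t^2) = π / 4 := by
  have key : ∫ t in (0:ℝ)..1, t^2 / Real.sqrt (1 - t^2)
      = (fun t : ℝ => (Real.arcsin t - t * Real.sqrt (1 - t^2)) / 2) 1
        - (fun t : ℝ => (Real.arcsin t - t * Real.sqrt (1 - t^2)) / 2) 0 := by
    apply integral_eq_sub_of_hasDeriv_right_of_le
      (f := fun t : ℝ => (Real.arcsin t - t * Real.sqrt (1 - t^2)) / 2)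
      (f' := fun t : ℝ => t^2 / Real.sqrt (1 - t^2)) (by norm_num)
    · exact ((Real.continuous_arcsin.sub
        (continuous_id.mul (Real.continuous_sqrt.comp (by continuity)))).div_const 2).continuousOn
    · intro x hx
      have hx2 : (0:ℝ) < 1 - x^2 := by nlinarith [hx.1, hx.2]
      have hsx : (0:ℝ) < Real.sqrt (1 - x^2) := Real.sqrt_pos.mpr hx2
      have hsq : Real.sqrt (1 - x^2) ^ 2 = 1 - x^2 := Real.sq_sqrt hx2.le
      have h1 : HasDerivAt (fun t : ℝ => 1 - t^2) (-(2*x)) x := by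
        simpa using ((hasDerivAt_pow 2 x).const_sub 1)
      have h2 := (Real.hasDerivAt_sqrt (ne_of_gt hx2)).comp x h1
      have h3 := (hasDerivAt_id x).mul h2
      have h4 := (Real.hasDerivAt_arcsin (by nlinarith : x ≠ -1) (by nlinarith : x ≠ 1)).sub h3
      have h5 := h4.div_const 2
      have heq : (1 / Real.sqrt (1 - x^2) -
          (1 * Real.sqrt (1 - x^2) + x * (1 / (2 * Real.sqrt (1 - x^2)) * -(2*x)))) / 2
          = x^2 / Real.sqrt (1 - x^2) := by
        field_simp
        nlinarith [hsq]
      simp only [Function.comp_def, id_eq] at h5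
      rw [heq] at h5
      exact h5.hasDerivWithinAt
    · exact mrs_ii_t2
  rw [key]; simp [Real.arcsin_one]; ring

end MRSAux

set_option maxHeartbeats 1000000 in
/-- **Bound on the Mhaskar–Rakhmanov–Saff number of the output density.**
Let `|X| ≤ M` a.s. with `M > 0`, `N ~ N(0,1)` independent of `X`, and let `Y = X + N`
have density `p_Y = e^{-Q}`, `p_Y(y) = (1/√(2π)) E[exp(-(y-X)²/2)]`. If `a > 0` and
`n ≥ 1` satisfy `n = (2/π) ∫₀¹ a t Q'(a t)/√(1-t²) dt` (i.e., `a` is the `n`-th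
Mhaskar–Rakhmanov–Saff number of `Q`), then `a ≤ (2M + √2)√n`. In particular, for
every `z ≥ 0`, `∫₀¹ z t Q'(z t)/√(1-t²) dt ≥ (π/4) z² - M z`. -/
theorem mhaskar_rakhmanov_saff_bound
    {Ω : Type*} [MeasurableSpace Ω] (μ : Measure Ω) [IsProbabilityMeasure μ]
    (X N : Ω → ℝ) (hXmeas : Measurable X) (hNmeas : Measurable N)
    (M : ℝ) (hM : 0 < M) (hXbdd : ∀ᵐ ω ∂μ, |X ω| ≤ M)
    (hN : Measure.map N μ = gaussianReal 0 1)
    (hindep : IndepFun X N μ)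
    (pY Q : ℝ → ℝ)
    (hpY : ∀ y, pY y = (Real.sqrt (2 * π))⁻¹ * ∫ ω, Real.exp (-(y - X ω) ^ 2 / 2) ∂μ)
    (hQ : ∀ y, Q y = -Real.log (pY y))
    (a : ℝ) (ha : 0 < a) (n : ℕ) (hn : 1 ≤ n)
    (hMRS : (n : ℝ) = (2 / π) *
      ∫ t in (0 : ℝ)..1, a * t * deriv Q (a * t) / Real.sqrt (1 - t ^ 2)) :
    a ≤ (2 * M + Real.sqrt 2) * Real.sqrt n ∧
    ∀ z : ℝ, 0 ≤ z →
      (π / 4) * z ^ 2 - M * z ≤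
        ∫ t in (0 : ℝ)..1, z * t * deriv Q (z * t) / Real.sqrt (1 - t ^ 2) := by
  have hπ : (0:ℝ) < π := Real.pi_pos
  have hc : (0:ℝ) < (Real.sqrt (2 * π))⁻¹ := by positivity
  -- basic integrability facts
  have hm : ∀ u : ℝ, Measurable (fun ω => Real.exp (-(u - X ω) ^ 2 / 2)) := fun u =>
    (((measurable_const.sub hXmeas).pow_const 2).neg.div_const 2).exp
  have hint : ∀ y : ℝ, Integrable (fun ω => Real.exp (-(y - X ω) ^ 2 / 2)) μ := by
    intro y
    refine (integrable_const (1:ℝ)).mono' (hm y).aestronglyMeasurable ?_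
    filter_upwards with ω
    rw [Real.norm_eq_abs, abs_of_nonneg (Real.exp_pos _).le]
    exact Real.exp_le_one_iff.mpr (by nlinarith [sq_nonneg (y - X ω)])
  have hgpos : ∀ y : ℝ, 0 < ∫ ω, Real.exp (-(y - X ω) ^ 2 / 2) ∂μ := fun y =>
    integral_exp_pos (hint y)
  have hm1 : ∀ y : ℝ, Measurable (fun ω => (y - X ω) * Real.exp (-(y - X ω) ^ 2 / 2)) :=
    fun y => (measurable_const.sub hXmeas).mul (hm y)
  have hint1 : ∀ y : ℝ, Integrable (fun ω => (y - X ω) * Real.exp (-(y - X ω) ^ 2 / 2)) μ := by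
    intro y
    refine (integrable_const (|y| + M)).mono' (hm1 y).aestronglyMeasurable ?_
    filter_upwards [hXbdd] with ω hω
    rw [Real.norm_eq_abs, abs_mul, abs_of_nonneg (Real.exp_pos _).le]
    calc |y - X ω| * Real.exp (-(y - X ω) ^ 2 / 2) ≤ |y - X ω| * 1 :=
          mul_le_mul_of_nonneg_left
            (Real.exp_le_one_iff.mpr (by nlinarith [sq_nonneg (y - X ω)])) (abs_nonneg _)
      _ ≤ |y| + M := by
          rw [mul_one]
          calc |y - X ω| ≤ |y| + |X ω| := abs_sub _ _
            _ ≤ |y| + M := by linarith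
  -- derivative of the integral
  have hgderiv : ∀ y : ℝ, HasDerivAt (fun u => ∫ ω, Real.exp (-(u - X ω) ^ 2 / 2) ∂μ)
      (∫ ω, -((y - X ω) * Real.exp (-(y - X ω) ^ 2 / 2)) ∂μ) y := by
    intro y
    have key := hasDerivAt_integral_of_dominated_loc_of_deriv_le
      (F := fun u ω => Real.exp (-(u - X ω) ^ 2 / 2))
      (F' := fun u ω => -((u - X ω) * Real.exp (-(u - X ω) ^ 2 / 2)))
      (x₀ := y) (bound := fun _ => |y| + 1 + M) (μ := μ) (Metric.ball_mem_nhds y one_pos)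
      (Eventually.of_forall fun u => (hm u).aestronglyMeasurable)
      (hint y) ((hm1 y).neg).aestronglyMeasurable ?_ (integrable_const _) ?_
    · exact key.2
    · filter_upwards [hXbdd] with ω hω u hu
      rw [Real.norm_eq_abs, abs_neg, abs_mul, abs_of_nonneg (Real.exp_pos _).le]
      have h1 : Real.exp (-(u - X ω) ^ 2 / 2) ≤ 1 :=
        Real.exp_le_one_iff.mpr (by nlinarith [sq_nonneg (u - X ω)])
      have h2 : |u - X ω| ≤ |y| + 1 + M := by
        have hu' : |u - y| < 1 := by simpa [Real.dist_eq] using Metric.mem_ball.mp hu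
        have h3 : |u| ≤ |y| + 1 := by
          have := abs_sub_abs_le_abs_sub u y
          linarith
        calc |u - X ω| ≤ |u| + |X ω| := abs_sub _ _
          _ ≤ |y| + 1 + M := by linarith
      nlinarith [abs_nonneg (u - X ω), Real.exp_pos (-(u - X ω) ^ 2 / 2)]
    · filter_upwards with ω u _
      have h1 : HasDerivAt (fun u : ℝ => -(u - X ω) ^ 2 / 2) (-(u - X ω)) u := by
        have := (((hasDerivAt_id u).sub_const (X ω)).pow 2).neg.div_const 2
        exact this.congr_deriv (by simp only [id_eq]; ring)
      have h2 := h1.exp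
      exact h2.congr_deriv (by ring)
  -- derivative of Q
  have hQderiv : ∀ y : ℝ, HasDerivAt Q
      ((∫ ω, (y - X ω) * Real.exp (-(y - X ω) ^ 2 / 2) ∂μ) /
        ∫ ω, Real.exp (-(y - X ω) ^ 2 / 2) ∂μ) y := by
    intro y
    set g1 := ∫ ω, (y - X ω) * Real.exp (-(y - X ω) ^ 2 / 2) ∂μ with hg1
    set g := ∫ ω, Real.exp (-(y - X ω) ^ 2 / 2) ∂μ with hg
    have hcg : HasDerivAt (fun u => (Real.sqrt (2 * π))⁻¹ * ∫ ω, Real.exp (-(u - X ω) ^ 2 / 2) ∂μ)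
        ((Real.sqrt (2 * π))⁻¹ * ∫ ω, -((y - X ω) * Real.exp (-(y - X ω) ^ 2 / 2)) ∂μ) y :=
      (hgderiv y).const_mul _
    have hpos : 0 < (Real.sqrt (2 * π))⁻¹ * g := mul_pos hc (hgpos y)
    have hlog := (Real.hasDerivAt_log (ne_of_gt hpos)).comp y hcg
    have hQeq : Q = fun u => -Real.log ((Real.sqrt (2 * π))⁻¹ *
        ∫ ω, Real.exp (-(u - X ω) ^ 2 / 2) ∂μ) := by
      funext u; rw [hQ, hpY]
    have hneg : (∫ ω, -((y - X ω) * Real.exp (-(y - X ω) ^ 2 / 2)) ∂μ) = -g1 := by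
      rw [hg1, ← integral_neg]
    rw [hneg] at hlog
    have := hlog.neg
    simp only [Function.comp_def, Pi.neg_def] at this
    rw [← hQeq] at this
    refine this.congr_deriv ?_
    have hgne : g ≠ 0 := ne_of_gt (hgpos y)
    have hcne : (Real.sqrt (2 * π))⁻¹ ≠ 0 := ne_of_gt hc
    field_simp
  have hderivQ : ∀ y : ℝ, deriv Q y =
      (∫ ω, (y - X ω) * Real.exp (-(y - X ω) ^ 2 / 2) ∂μ) /
        ∫ ω, Real.exp (-(y - X ω) ^ 2 / 2) ∂μ := fun y => (hQderiv y).deriv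
  -- bounds on deriv Q
  have hbd : ∀ y : ℝ, y - M ≤ deriv Q y ∧ deriv Q y ≤ y + M := by
    intro y
    have h1 : (y - M) * ∫ ω, Real.exp (-(y - X ω) ^ 2 / 2) ∂μ ≤
        ∫ ω, (y - X ω) * Real.exp (-(y - X ω) ^ 2 / 2) ∂μ := by
      rw [← integral_const_mul]
      refine integral_mono_ae ((hint y).const_mul _) (hint1 y) ?_
      filter_upwards [hXbdd] with ω hω
      have := (abs_le.mp hω).2
      exact mul_le_mul_of_nonneg_right (by linarith) (Real.exp_pos _).le
    have h2 : (∫ ω, (y - X ω) * Real.exp (-(y - X ω) ^ 2 / 2) ∂μ) ≤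
        (y + M) * ∫ ω, Real.exp (-(y - X ω) ^ 2 / 2) ∂μ := by
      rw [← integral_const_mul]
      refine integral_mono_ae (hint1 y) ((hint y).const_mul _) ?_
      filter_upwards [hXbdd] with ω hω
      have := (abs_le.mp hω).1
      exact mul_le_mul_of_nonneg_right (by linarith) (Real.exp_pos _).le
    rw [hderivQ y]
    constructor
    · rw [le_div_iff₀ (hgpos y)]; exact h1
    · rw [div_le_iff₀ (hgpos y)]; exact h2
  have hmeasQ' : Measurable (deriv Q) := measurable_deriv Q
  -- the second claim
  have part2 : ∀ z : ℝ, 0 ≤ z →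
      (π / 4) * z ^ 2 - M * z ≤
        ∫ t in (0 : ℝ)..1, z * t * deriv Q (z * t) / Real.sqrt (1 - t ^ 2) := by
    intro z hz
    have hIIφ : IntervalIntegrable
        (fun t => z * t * deriv Q (z * t) / Real.sqrt (1 - t ^ 2)) volume 0 1 := by
      refine mrs_ii_div ((measurable_const.mul measurable_id).mul
        (hmeasQ'.comp (measurable_const_mul z))) (z * (z + M)) ?_
      intro t ht
      have hzt : 0 ≤ z * t := mul_nonneg hz ht.1.le
      have h1 := (hbd (z * t)).1
      have h2 := (hbd (z * t)).2
      rw [abs_mul, abs_of_nonneg hzt]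
      have h3 : |deriv Q (z * t)| ≤ z * t + M := by
        rw [abs_le]; constructor <;> nlinarith [abs_nonneg (z*t)]
      calc z * t * |deriv Q (z * t)| ≤ z * t * (z * t + M) :=
            mul_le_mul_of_nonneg_left h3 hzt
        _ ≤ z * (z + M) := by
            nlinarith [mul_nonneg (mul_nonneg hz hz) (by nlinarith [ht.1.le, ht.2] : (0:ℝ) ≤ 1 - t^2),
              mul_nonneg (mul_nonneg hM.le hz) (by linarith [ht.2] : (0:ℝ) ≤ 1 - t)]
    have hIIψ : IntervalIntegrable
        (fun t : ℝ => z^2 * (t^2 / Real.sqrt (1 - t^2)) - M * z * (t / Real.sqrt (1 - t^2)))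
        volume 0 1 := (mrs_ii_t2.const_mul _).sub (mrs_ii_t.const_mul _)
    have hmono : (∫ t in (0:ℝ)..1,
          (z^2 * (t^2 / Real.sqrt (1 - t^2)) - M * z * (t / Real.sqrt (1 - t^2))))
        ≤ ∫ t in (0:ℝ)..1, z * t * deriv Q (z * t) / Real.sqrt (1 - t ^ 2) := by
      refine intervalIntegral.integral_mono_on (by norm_num) hIIψ hIIφ ?_
      intro t ht
      have hzt : 0 ≤ z * t := mul_nonneg hz ht.1
      have heq : z^2 * (t^2 / Real.sqrt (1 - t^2)) - M * z * (t / Real.sqrt (1 - t^2))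
          = (z * t * (z * t - M)) / Real.sqrt (1 - t^2) := by
        ring
      rw [heq]
      apply div_le_div_of_nonneg_right ?_ (Real.sqrt_nonneg (1 - t^2))
      exact mul_le_mul_of_nonneg_left (by linarith [(hbd (z*t)).1]) hzt
    have hval : (∫ t in (0:ℝ)..1,
          (z^2 * (t^2 / Real.sqrt (1 - t^2)) - M * z * (t / Real.sqrt (1 - t^2))))
        = (π / 4) * z ^ 2 - M * z := by
      rw [intervalIntegral.integral_sub (mrs_ii_t2.const_mul _) (mrs_ii_t.const_mul _),
        intervalIntegral.integral_const_mul, intervalIntegral.integral_const_mul,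
        mrs_int_t2, mrs_int_t]
      ring
    rw [hval] at hmono
    exact hmono
  refine ⟨?_, part2⟩
  -- first claim
  have hkey := part2 a ha.le
  have hn' : a^2/2 - M*a ≤ (n:ℝ) := by
    rw [hMRS]
    have h2 : (2/π) * ((π/4)*a^2 - M*a) ≤ (2/π) *
        ∫ t in (0:ℝ)..1, a * t * deriv Q (a * t) / Real.sqrt (1 - t ^ 2) :=
      mul_le_mul_of_nonneg_left hkey (by positivity)
    have h3 : a^2/2 - M*a ≤ (2/π)*((π/4)*a^2 - M*a) := by
      have heq : (2/π)*((π/4)*a^2 - M*a) = a^2/2 - 2*(M*a)/π := by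
        field_simp; ring
      rw [heq]
      have h4 : 2*(M*a)/π ≤ M*a := by
        rw [div_le_iff₀ hπ]
        nlinarith [Real.pi_gt_three, mul_pos hM ha]
      linarith
    linarith
  set s := Real.sqrt n with hs_def
  have hs1 : 1 ≤ s := by
    rw [hs_def, show (1:ℝ) = Real.sqrt 1 by simp]
    exact Real.sqrt_le_sqrt (by exact_mod_cast hn)
  have hs2 : s^2 = (n:ℝ) := Real.sq_sqrt (Nat.cast_nonneg n)
  have h2a : Real.sqrt 2 ^ 2 = 2 := Real.sq_sqrt (by norm_num)
  have h2b : 1 ≤ Real.sqrt 2 := by nlinarith [Real.sqrt_nonneg 2]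
  by_contra hcon
  push_neg at hcon
  nlinarith [mul_pos hM ha, mul_pos hM (lt_of_lt_of_le one_pos hs1),
    mul_lt_mul_of_pos_left hcon ha, sq_nonneg (a - Real.sqrt 2 * s),
    mul_pos (lt_of_lt_of_le one_pos h2b) (lt_of_lt_of_le one_pos hs1)]
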